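/- arXiv:2601.19703 — 5 statements merged into one kernel-verified Lean document; each statement's English description precedes it below -/
import Mathlib

section
/- Let H be a complex Hilbert space, let {P_j}_{j=1}^{m} be a finite complete family of orthogonal projections on H, and let Q be an orthogonal projection on H. Suppose that for every vector ψ ∈ H and all indices j ≠ ℓ one has ⟨Q P_j ψ, Q P_ℓ ψ⟩ = 0 (i.e. the two-time decoherent histories condition ⟨ψ, P_j Q P_ℓ ψ⟩ = 0 holds for all initial states ψ). Then Q commutes with every P_j: [P_j, Q] = 0 for all j. -/
/-- if `{P j}` is a finite complete family of orthogonal projections and `Q`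
is an orthogonal projection on a complex Hilbert space such that the two-time decoherent
histories condition `⟨Q (P j ψ), Q (P ℓ ψ)⟩ = 0` holds for every vector `ψ` and all
`j ≠ ℓ`, then `Q` commutes with every `P j`. -/
theorem stmt_2 {H : Type*} [NormedAddCommGroup H] [InnerProductSpace ℂ H] [CompleteSpace H]
    {m : ℕ} (P : Fin m → H →L[ℂ] H) (Q : H →L[ℂ] H)
    (hPsa : ∀ j, IsSelfAdjoint (P j))
    (hPorth : ∀ j ℓ, P j * P ℓ = if j = ℓ then P j else 0)
    (hPsum : ∑ j, P j = 1)
    (hQsa : IsSelfAdjoint Q)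
    (hQidem : Q * Q = Q)
    (hyp : ∀ (ψ : H) (j ℓ : Fin m), j ≠ ℓ → (inner ℂ (Q (P j ψ)) (Q (P ℓ ψ)) : ℂ) = 0) :
    ∀ j, P j * Q - Q * P j = 0 := by
  -- Step 1: for j ≠ ℓ, P j * Q * P ℓ = 0
  have key : ∀ j ℓ : Fin m, j ≠ ℓ → P j * Q * P ℓ = 0 := by
    intro j ℓ hjl
    have h0 : ∀ ψ : H, (inner ℂ ((P j * Q * P ℓ) ψ) ψ : ℂ) = 0 := by
      intro ψ
      have h1 : ((P j * Q * P ℓ) ψ) = P j (Q (P ℓ ψ)) := rfl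
      rw [h1, ← ContinuousLinearMap.adjoint_inner_right, (hPsa j).adjoint_eq]
      have h2 : Q (P ℓ ψ) = Q (Q (P ℓ ψ)) := by
        conv_lhs => rw [← hQidem]
        rfl
      rw [h2, ← ContinuousLinearMap.adjoint_inner_right, hQsa.adjoint_eq]
      have := hyp ψ j ℓ hjl
      rw [← inner_conj_symm] at this
      simpa using (star_eq_zero.mp (by simpa using this))
    have hz := (inner_map_self_eq_zero ((P j * Q * P ℓ : H →L[ℂ] H) : H →ₗ[ℂ] H)).mp
      (fun x => h0 x)
    ext ψ
    exact congrFun (congrArg DFunLike.coe hz) ψ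
  intro j
  -- P j * Q = P j * Q * P j
  have hL : P j * Q = P j * Q * P j := by
    calc P j * Q = (P j * Q) * 1 := by rw [mul_one]
    _ = (P j * Q) * ∑ ℓ, P ℓ := by rw [hPsum]
    _ = ∑ ℓ, P j * Q * P ℓ := by rw [Finset.mul_sum]
    _ = P j * Q * P j := by
        rw [Finset.sum_eq_single j]
        · intro ℓ _ hℓ; exact key j ℓ (Ne.symm hℓ)
        · intro h; exact absurd (Finset.mem_univ j) h
  have hR : Q * P j = P j * Q * P j := by
    calc Q * P j = 1 * (Q * P j) := by rw [one_mul]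
    _ = (∑ ℓ, P ℓ) * (Q * P j) := by rw [hPsum]
    _ = ∑ ℓ, P ℓ * Q * P j := by rw [Finset.sum_mul]; simp [mul_assoc]
    _ = P j * Q * P j := by
        rw [Finset.sum_eq_single j]
        · intro ℓ _ hℓ; exact key ℓ j hℓ
        · intro h; exact absurd (Finset.mem_univ j) h
  rw [hL, hR, sub_self]
end

section
/- Let H be a complex Hilbert space and let Φ, Ψ ∈ H be unit vectors whose inner product F = ⟨Φ, Ψ⟩ is real with 0 ≤ F ≤ 1. Then there exists a unitary operator V on H such that V Φ = Ψ, V x = x for every x orthogonal to the subspace K = span{Φ, Ψ}, and the operator norm of V − 1 (restricted to K, equivalently of V − 1 when Φ ≠ Ψ) satisfies ‖V − 1‖² = 2(1 − F) on K; in particular ‖(V − 1)x‖² ≤ 2(1−F)‖x‖² for all x ∈ H. -/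
open scoped InnerProductSpace ComplexConjugate

private lemma refl_formula' {H : Type*} [NormedAddCommGroup H] [InnerProductSpace ℂ H] (w x : H) :
    Submodule.reflection ((ℂ ∙ w)ᗮ) x = x - (2 * (⟪w, x⟫_ℂ / ⟪w, w⟫_ℂ)) • w := by
  rw [Submodule.reflection_orthogonal_apply, Submodule.reflection_singleton_apply, inner_self_eq_norm_sq_to_K]
  module

set_option maxHeartbeats 1000000 in
/-- given unit vectors `Φ, Ψ` in a complex Hilbert space with real inner
product `F ∈ [0,1]`, there is a unitary `V` with `V Φ = Ψ`, fixing every vector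
orthogonal to `K = span{Φ, Ψ}`, such that `‖V x - x‖² ≤ 2(1-F)‖x‖²` for all `x`, and the
bound `2(1-F)` is attained on a unit vector of `K` (i.e. `‖(V-1)|_K‖² = 2(1-F)`). -/
theorem stmt_6 {H : Type*} [NormedAddCommGroup H] [InnerProductSpace ℂ H]
    (Φ Ψ : H) (hΦ : ‖Φ‖ = 1) (hΨ : ‖Ψ‖ = 1) (F : ℝ)
    (hF : (inner ℂ Φ Ψ : ℂ) = (F : ℂ)) (hF0 : 0 ≤ F) (hF1 : F ≤ 1) :
    ∃ V : H ≃ₗᵢ[ℂ] H, V Φ = Ψ ∧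
      (∀ x : H, (inner ℂ Φ x : ℂ) = 0 → (inner ℂ Ψ x : ℂ) = 0 → V x = x) ∧
      (∀ x : H, ‖V x - x‖ ^ 2 ≤ 2 * (1 - F) * ‖x‖ ^ 2) ∧
      (∃ x ∈ Submodule.span ℂ ({Φ, Ψ} : Set H), ‖x‖ = 1 ∧ ‖V x - x‖ ^ 2 = 2 * (1 - F)) := by
  have iΦΦ : ⟪Φ, Φ⟫_ℂ = 1 := by rw [inner_self_eq_norm_sq_to_K, hΦ]; norm_num
  have iΨΨ : ⟪Ψ, Ψ⟫_ℂ = 1 := by rw [inner_self_eq_norm_sq_to_K, hΨ]; norm_num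
  have iΨΦ : ⟪Ψ, Φ⟫_ℂ = (F : ℂ) := by rw [← inner_conj_symm, hF, Complex.conj_ofReal]
  by_cases hF' : F = 1
  · have hΦΨ : Φ = Ψ := by
      have h0 : ⟪Φ - Ψ, Φ - Ψ⟫_ℂ = 0 := by
        simp only [inner_sub_left, inner_sub_right, iΦΦ, iΨΨ, hF, iΨΦ, hF']
        norm_num
      rw [inner_self_eq_zero, sub_eq_zero] at h0
      exact h0
    refine ⟨LinearIsometryEquiv.refl ℂ H, hΦΨ ▸ rfl, fun x _ _ => rfl, ?_, ⟨Φ, ?_, hΦ, ?_⟩⟩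
    · intro x; simp [hF']
    · exact Submodule.subset_span (Set.mem_insert _ _)
    · simp [hF']
  · have htR : 0 < 1 - F := by
      rcases lt_or_eq_of_le hF1 with h | h
      · linarith
      · exact absurd h hF'
    have ht : (1 : ℂ) - (F : ℂ) ≠ 0 := by
      intro h; apply htR.ne'
      have := congrArg Complex.re h; simpa using this
    have hp : (0:ℝ) < 1 + F := by linarith
    have h1 : (1 : ℂ) - (F : ℂ) ^ 2 ≠ 0 := by
      have : (1 : ℂ) - (F:ℂ)^2 = ((1 - F^2 : ℝ) : ℂ) := by push_cast; ring
      rw [this, Ne, Complex.ofReal_eq_zero]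
      nlinarith
    have h2 : (2 : ℂ) - 2 * (F : ℂ) ≠ 0 := by
      intro h; apply ht; linear_combination h / 2
    set u : H := Φ - Ψ with hu
    set v : H := Ψ - (F : ℂ) • Φ with hv
    have iuu : ⟪u, u⟫_ℂ = 2 - 2 * (F : ℂ) := by
      simp only [hu, inner_sub_left, inner_sub_right, iΦΦ, iΨΨ, hF, iΨΦ]; ring
    have ivv : ⟪v, v⟫_ℂ = 1 - (F : ℂ) ^ 2 := by
      simp only [hv, inner_sub_left, inner_sub_right, inner_smul_left, inner_smul_right,
        iΦΦ, iΨΨ, hF, iΨΦ, Complex.conj_ofReal]; ring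
    have iuv : ⟪u, v⟫_ℂ = (F : ℂ) ^ 2 - 1 := by
      simp only [hu, hv, inner_sub_left, inner_sub_right, inner_smul_right,
        iΦΦ, iΨΨ, hF, iΨΦ]; ring
    have ivΦ : ⟪v, Φ⟫_ℂ = 0 := by
      simp only [hv, inner_sub_left, inner_smul_left, iΦΦ, iΨΦ, Complex.conj_ofReal]; ring
    have iuΦ : ⟪u, Φ⟫_ℂ = 1 - (F : ℂ) := by
      simp only [hu, inner_sub_left, iΦΦ, iΨΦ]
    set V : H ≃ₗᵢ[ℂ] H := (Submodule.reflection ((ℂ ∙ v)ᗮ)).trans (Submodule.reflection ((ℂ ∙ u)ᗮ)) with hV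
    have hVx : ∀ x : H, V x = x - (2 * (⟪v, x⟫_ℂ / (1 - (F:ℂ)^2))) • v
        - (2 * ((⟪u, x⟫_ℂ + 2 * ⟪v, x⟫_ℂ) / (2 - 2*(F:ℂ)))) • u := by
      intro x
      have e1 : Submodule.reflection ((ℂ ∙ v)ᗮ) x = x - (2 * (⟪v, x⟫_ℂ / (1 - (F:ℂ)^2))) • v := by
        rw [refl_formula', ivv]
      have e3 : ⟪u, Submodule.reflection ((ℂ ∙ v)ᗮ) x⟫_ℂ = ⟪u, x⟫_ℂ + 2 * ⟪v, x⟫_ℂ := by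
        rw [e1, inner_sub_right, inner_smul_right, iuv]
        field_simp
        ring
      have : V x = Submodule.reflection ((ℂ ∙ u)ᗮ) (Submodule.reflection ((ℂ ∙ v)ᗮ) x) := rfl
      rw [this, refl_formula', e3, iuu, e1]
    refine ⟨V, ?_, ?_, ?_, ?_⟩
    · -- V Φ = Ψ
      rw [hVx, ivΦ, iuΦ]
      have s2 : (2 * (((1 - (F:ℂ)) + 2 * 0) / (2 - 2*(F:ℂ)))) = 1 := by
        field_simp; ring
      rw [s2]
      simp [hu]
    · intro x hx1 hx2
      have h1 : ⟪u, x⟫_ℂ = 0 := by simp [hu, inner_sub_left, hx1, hx2]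
      have h2 : ⟪v, x⟫_ℂ = 0 := by
        rw [hv, inner_sub_left, inner_smul_left, hx1, hx2]; ring
      rw [hVx, h1, h2]
      simp
    all_goals {
      have ivu : ⟪v, u⟫_ℂ = (F:ℂ)^2 - 1 := by
        rw [← inner_conj_symm, iuv]; simp [map_sub, map_pow, Complex.conj_ofReal]
      have iΦv : ⟪Φ, v⟫_ℂ = 0 := by rw [← inner_conj_symm, ivΦ]; simp
      have hdd : ∀ x : H, ⟪V x - x, V x - x⟫_ℂ =
          2 * (1 - (F:ℂ)) * (⟪x, Φ⟫_ℂ * ⟪Φ, x⟫_ℂ + ⟪x, v⟫_ℂ * ⟪v, x⟫_ℂ / (1 - (F:ℂ)^2)) := by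
        intro x
        have hbx : ⟪u, x⟫_ℂ = (1 - (F:ℂ)) * ⟪Φ, x⟫_ℂ - ⟪v, x⟫_ℂ := by
          simp only [hu, hv, inner_sub_left, inner_smul_left, Complex.conj_ofReal]; ring
        have hbx' : ⟪x, u⟫_ℂ = (1 - (F:ℂ)) * ⟪x, Φ⟫_ℂ - ⟪x, v⟫_ℂ := by
          simp only [hu, hv, inner_sub_right, inner_smul_right]; ring
        have hd : V x - x = -((2 * (⟪v, x⟫_ℂ / (1 - (F:ℂ)^2))) • v)
            - (2 * ((⟪u, x⟫_ℂ + 2 * ⟪v, x⟫_ℂ) / (2 - 2*(F:ℂ)))) • u := by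
          rw [hVx x]; abel
        rw [hd]
        have expand : ∀ α β : ℂ, ⟪-(α • v) - β • u, -(α • v) - β • u⟫_ℂ =
            (starRingEnd ℂ) α * α * (1 - (F:ℂ)^2)
            + ((starRingEnd ℂ) α * β + (starRingEnd ℂ) β * α) * ((F:ℂ)^2 - 1)
            + (starRingEnd ℂ) β * β * (2 - 2*(F:ℂ)) := by
          intro α β
          simp only [inner_sub_left, inner_sub_right, inner_neg_left, inner_neg_right,
            inner_smul_left, inner_smul_right, iuu, ivv, iuv, ivu, map_neg]
          ring
        rw [expand, mul_div_assoc]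
        set A : ℂ := ⟪v, x⟫_ℂ / (1 - (F:ℂ)^2) with hA
        set B : ℂ := (⟪u, x⟫_ℂ + 2 * ⟪v, x⟫_ℂ) / (2 - 2*(F:ℂ)) with hB
        have ha : ⟪v, x⟫_ℂ = A * (1 - (F:ℂ)^2) := (div_mul_cancel₀ _ h1).symm
        have hbb : ⟪u, x⟫_ℂ + 2 * ⟪v, x⟫_ℂ = B * (2 - 2*(F:ℂ)) :=
          (div_mul_cancel₀ _ h2).symm
        have haC : ⟪x, v⟫_ℂ = (starRingEnd ℂ) A * (1 - (F:ℂ)^2) := by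
          rw [← inner_conj_symm, ha]
          simp [map_mul, map_sub, map_one, map_pow, Complex.conj_ofReal]
        have hP : ⟪Φ, x⟫_ℂ = 2*B - A*(1 + (F:ℂ)) := by
          apply mul_left_cancel₀ ht
          linear_combination -hbx + hbb - ha
        have hPC : ⟪x, Φ⟫_ℂ = 2*(starRingEnd ℂ) B - (starRingEnd ℂ) A * (1 + (F:ℂ)) := by
          rw [← inner_conj_symm, hP]
          simp [map_sub, map_mul, map_add, map_one, map_ofNat, Complex.conj_ofReal]
        rw [hP, hPC, haC]
        simp only [map_mul, map_ofNat]
        ring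
      have cast_sq : ∀ z : H, ((‖z‖^2 : ℝ) : ℂ) = ⟪z, z⟫_ℂ := by
        intro z; rw [Complex.ofReal_pow]; exact (inner_self_eq_norm_sq_to_K z).symm
      have hdd' : ∀ x : H, ‖V x - x‖^2
          = 2*(1-F) * (Complex.normSq ⟪Φ, x⟫_ℂ + Complex.normSq ⟪v, x⟫_ℂ / (1 - F^2)) := by
        intro x
        have hc : ((‖V x - x‖^2 : ℝ) : ℂ)
            = ((2*(1-F) * (Complex.normSq ⟪Φ, x⟫_ℂ + Complex.normSq ⟪v, x⟫_ℂ / (1 - F^2)) : ℝ) : ℂ) := by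
          rw [cast_sq, hdd x]
          push_cast
          rw [Complex.normSq_eq_conj_mul_self, Complex.normSq_eq_conj_mul_self,
            inner_conj_symm, inner_conj_symm]
          try ring
        exact_mod_cast hc
      have h1R : (0:ℝ) < 1 - F^2 := by nlinarith
      have bessel : ∀ x : H,
          Complex.normSq ⟪Φ, x⟫_ℂ + Complex.normSq ⟪v, x⟫_ℂ / (1 - F^2) ≤ ‖x‖^2 := by
        intro x
        set y : H := x - ⟪Φ, x⟫_ℂ • Φ - (⟪v, x⟫_ℂ / (1 - (F:ℂ)^2)) • v with hy
        have expand2 : ∀ γ δ : ℂ, ⟪x - γ • Φ - δ • v, x - γ • Φ - δ • v⟫_ℂ =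
            ⟪x, x⟫_ℂ - (starRingEnd ℂ) γ * ⟪Φ, x⟫_ℂ - γ * ⟪x, Φ⟫_ℂ
            + (starRingEnd ℂ) γ * γ
            - (starRingEnd ℂ) δ * ⟪v, x⟫_ℂ - δ * ⟪x, v⟫_ℂ
            + (starRingEnd ℂ) δ * δ * (1 - (F:ℂ)^2) := by
          intro γ δ
          simp only [inner_sub_left, inner_sub_right, inner_smul_left, inner_smul_right,
            iΦΦ, ivv, iΦv, ivΦ]
          ring
        have hyy : ⟪y, y⟫_ℂ = ⟪x, x⟫_ℂ
            - (⟪x, Φ⟫_ℂ * ⟪Φ, x⟫_ℂ + ⟪x, v⟫_ℂ * (⟪v, x⟫_ℂ / (1 - (F:ℂ)^2))) := by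
          rw [hy, expand2]
          set A : ℂ := ⟪v, x⟫_ℂ / (1 - (F:ℂ)^2) with hA
          have ha : ⟪v, x⟫_ℂ = A * (1 - (F:ℂ)^2) := (div_mul_cancel₀ _ h1).symm
          have haC : ⟪x, v⟫_ℂ = (starRingEnd ℂ) A * (1 - (F:ℂ)^2) := by
            rw [← inner_conj_symm, ha]
            simp [map_mul, map_sub, map_one, map_pow, Complex.conj_ofReal]
          rw [ha, haC, ← inner_conj_symm x Φ]
          ring
        have hc : ((‖y‖^2 : ℝ) : ℂ) = ((‖x‖^2
            - (Complex.normSq ⟪Φ, x⟫_ℂ + Complex.normSq ⟪v, x⟫_ℂ / (1 - F^2)) : ℝ) : ℂ) := by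
          rw [cast_sq, hyy, ← cast_sq x]
          push_cast
          rw [Complex.normSq_eq_conj_mul_self, Complex.normSq_eq_conj_mul_self,
            inner_conj_symm, inner_conj_symm]
          ring
        have hcr : ‖y‖^2 = ‖x‖^2
            - (Complex.normSq ⟪Φ, x⟫_ℂ + Complex.normSq ⟪v, x⟫_ℂ / (1 - F^2)) := by
          exact_mod_cast hc
        nlinarith [sq_nonneg ‖y‖]
      first
      | { intro x
          rw [hdd' x]
          have hb := bessel x
          have h2F : (0:ℝ) ≤ 2*(1-F) := by linarith
          calc 2*(1-F) * (Complex.normSq ⟪Φ, x⟫_ℂ + Complex.normSq ⟪v, x⟫_ℂ / (1 - F^2))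
              ≤ 2*(1-F) * ‖x‖^2 := mul_le_mul_of_nonneg_left hb h2F
            _ = 2*(1-F) * ‖x‖^2 := rfl }
      | { refine ⟨Φ, Submodule.subset_span (Set.mem_insert _ _), hΦ, ?_⟩
          rw [hdd' Φ, iΦΦ, ivΦ]
          simp } }
end

section
/- Let ψ_1, …, ψ_N be unit vectors in ℂ^d and let G be their N×N Gram matrix, G_{ij} = ⟨ψ_i, ψ_j⟩ (a positive semidefinite Hermitian matrix with nonnegative real determinant). Then there exists a POVM (M_x)_{x=1}^{N} on ℂ^d — i.e. positive semidefinite d×d complex matrices with ∑_{x=1}^{N} M_x = I — whose average success probability for the uniform ensemble satisfies (1/N) ∑_{x=1}^{N} ⟨ψ_x, M_x ψ_x⟩ ≥ (det G)^{1/N}. In particular the optimal average success probability P̄_S^opt of discriminating the uniformly weighted states ψ_1,…,ψ_N satisfies (det G)^{1/N} ≤ P̄_S^opt. -/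
open Matrix
open scoped ComplexOrder

namespace Stmt9Aux

lemma psd_re_nonneg {n : ℕ} {M : Matrix (Fin n) (Fin n) ℂ} (hM : M.PosSemidef)
    (v : Fin n → ℂ) : 0 ≤ (dotProduct (star v) (M *ᵥ v)).re := by
  have h := hM.dotProduct_mulVec_nonneg v
  simpa using (Complex.le_def.mp h).1

lemma psd_add {n : ℕ} {M P : Matrix (Fin n) (Fin n) ℂ} (hM : M.PosSemidef)
    (hP : P.PosSemidef) : (M + P).PosSemidef := by
  refine Matrix.PosSemidef.of_dotProduct_mulVec_nonneg (hM.1.add hP.1) fun x => ?_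
  rw [Matrix.add_mulVec, dotProduct_add]
  exact add_nonneg (hM.dotProduct_mulVec_nonneg x) (hP.dotProduct_mulVec_nonneg x)

lemma psd_smul {n : ℕ} {M : Matrix (Fin n) (Fin n) ℂ} (hM : M.PosSemidef)
    {c : ℝ} (hc : 0 ≤ c) : ((c : ℂ) • M).PosSemidef := by
  refine Matrix.PosSemidef.of_dotProduct_mulVec_nonneg ?_ fun x => ?_
  · unfold Matrix.IsHermitian
    rw [Matrix.conjTranspose_smul, hM.1]
    congr 1
    simp
  · rw [Matrix.smul_mulVec, dotProduct_smul]
    exact smul_nonneg (by exact_mod_cast Complex.zero_le_real.mpr hc) (hM.dotProduct_mulVec_nonneg x)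

lemma nonneg_eq_re {z : ℂ} (hz : 0 ≤ z) : z = ((z.re : ℝ) : ℂ) := by
  have h := (Complex.le_def.mp hz).2
  apply Complex.ext <;> simp [← h]


section LDLwrap

variable {N : ℕ} {G : Matrix (Fin N) (Fin N) ℂ}

/-- `LDL.lowerInv` with explicitly pinned instances on `Fin N`. -/
noncomputable def LI (hG : G.PosDef) : Matrix (Fin N) (Fin N) ℂ :=
  @LDL.lowerInv ℂ _ (Fin N) (inferInstanceAs (LinearOrder (Fin N)))
    (inferInstanceAs (WellFoundedLT (Fin N))) (inferInstanceAs (LocallyFiniteOrderBot (Fin N)))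
    G _ hG

/-- `LDL.diagEntries` with explicitly pinned instances on `Fin N`. -/
noncomputable def DE (hG : G.PosDef) : Fin N → ℂ :=
  @LDL.diagEntries ℂ _ (Fin N) (inferInstanceAs (LinearOrder (Fin N)))
    (inferInstanceAs (WellFoundedLT (Fin N))) (inferInstanceAs (LocallyFiniteOrderBot (Fin N)))
    G _ hG

lemma LI_conj (hG : G.PosDef) : LI hG * G * (LI hG)ᴴ = Matrix.diagonal (DE hG) := by
  have h := @LDL.diag_eq_lowerInv_conj ℂ _ (Fin N) (inferInstanceAs (LinearOrder (Fin N)))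
    (inferInstanceAs (WellFoundedLT (Fin N))) (inferInstanceAs (LocallyFiniteOrderBot (Fin N)))
    G _ hG
  unfold LI DE
  rw [← h]
  unfold LDL.diag
  congr!

lemma LI_tri (hG : G.PosDef) {i j : Fin N} (hij : i < j) : LI hG i j = 0 :=
  @LDL.lowerInv_triangular ℂ _ (Fin N) (inferInstanceAs (LinearOrder (Fin N)))
    (inferInstanceAs (WellFoundedLT (Fin N))) (inferInstanceAs (LocallyFiniteOrderBot (Fin N)))
    G _ hG i j hij

lemma LI_isUnit (hG : G.PosDef) : IsUnit (LI hG).det := by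
  have h := @LDL.invertibleLowerInv ℂ _ (Fin N) (inferInstanceAs (LinearOrder (Fin N)))
    (inferInstanceAs (WellFoundedLT (Fin N))) (inferInstanceAs (LocallyFiniteOrderBot (Fin N)))
    G _ hG
  haveI h' : Invertible (LI hG) := by
    refine ⟨h.invOf, ?_, ?_⟩
    · have e := h.invOf_mul_self
      convert e using 2
      congr!
    · have e := h.mul_invOf_self
      convert e using 2
      congr!
  exact Matrix.isUnit_det_of_invertible _

end LDLwrap

/-- Main construction: existence of a good POVM. -/
lemma main_povm (d N : ℕ) (hN : 1 ≤ N)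
    (ψ : Fin N → Fin d → ℂ)
    (hunit : ∀ x, dotProduct (star (ψ x)) (ψ x) = 1)
    (G : Matrix (Fin N) (Fin N) ℂ)
    (hG : ∀ i j, G i j = dotProduct (star (ψ i)) (ψ j)) :
    ∃ M : Fin N → Matrix (Fin d) (Fin d) ℂ,
      (∀ x, (M x).PosSemidef) ∧ (∑ x, M x = 1) ∧
      G.det.re ^ ((1 : ℝ) / N) ≤
        (1 / (N : ℝ)) * ∑ x, (dotProduct (star (ψ x)) (M x *ᵥ ψ x)).re := by
  have hN0 : (N : ℝ) ≠ 0 := Nat.cast_ne_zero.mpr (by omega)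
  have hNC : (N : ℂ) ≠ 0 := Nat.cast_ne_zero.mpr (by omega)
  -- the matrix whose columns are the states
  set A : Matrix (Fin d) (Fin N) ℂ := Matrix.of fun i x => ψ x i with hA
  have hAG : Aᴴ * A = G := by
    ext i j
    rw [hG]
    simp [Matrix.mul_apply, dotProduct, Matrix.conjTranspose_apply, hA]
  have hGpsd : G.PosSemidef := hAG ▸ Matrix.posSemidef_conjTranspose_mul_self A
  by_cases hdet : G.det = 0
  · -- trivial POVM
    refine ⟨fun _ => (Complex.ofReal ((N : ℝ)⁻¹)) • 1,
      fun x => psd_smul Matrix.PosSemidef.one (by positivity), ?_, ?_⟩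
    · rw [Finset.sum_const, Finset.card_univ, Fintype.card_fin, ← Nat.cast_smul_eq_nsmul ℂ,
        smul_smul]
      rw [show ((N : ℂ) * Complex.ofReal ((N:ℝ)⁻¹)) = 1 by push_cast; field_simp]
      simp
    · rw [hdet]
      simp only [Complex.zero_re]
      rw [Real.zero_rpow (one_div_ne_zero hN0)]
      refine mul_nonneg (by positivity) (Finset.sum_nonneg fun x _ => ?_)
      exact psd_re_nonneg (psd_smul Matrix.PosSemidef.one (by positivity : (0:ℝ) ≤ (N:ℝ)⁻¹)) _
  · -- G is positive definite
    have hGpd : G.PosDef := by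
      refine Matrix.PosDef.of_dotProduct_mulVec_pos hGpsd.1 fun x hx => lt_of_le_of_ne (hGpsd.dotProduct_mulVec_nonneg x) fun h0 => ?_
      -- if the form vanishes then A *ᵥ x = 0, so G *ᵥ x = 0, contradicting det ≠ 0
      have hAx : A *ᵥ x = 0 := by
        have key : dotProduct (star x) ((Aᴴ * A) *ᵥ x)
            = dotProduct (star (A *ᵥ x)) (A *ᵥ x) := by
          rw [← Matrix.mulVec_mulVec, Matrix.dotProduct_mulVec, ← Matrix.star_mulVec]
        have h1 : dotProduct (star (A *ᵥ x)) (A *ᵥ x) = 0 := by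
          rw [← key, hAG]; exact h0.symm
        exact dotProduct_star_self_eq_zero.mp h1
      have hGx : G *ᵥ x = 0 := by
        rw [← hAG, ← Matrix.mulVec_mulVec, hAx, Matrix.mulVec_zero]
      have : x = 0 := by
        have hu : IsUnit G.det := isUnit_iff_ne_zero.mpr hdet
        have := congrArg (fun v => G⁻¹ *ᵥ v) hGx
        simpa [Matrix.mulVec_mulVec, Matrix.nonsing_inv_mul G hu] using this
      exact hx this
    -- LDL decomposition machinery
    set Li := LI hGpd with hLi
    haveI : Invertible Li := Li.invertibleOfIsUnitDet (LI_isUnit hGpd)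
    set dE := DE hGpd with hdE0
    have hD : Li * G * Liᴴ = Matrix.diagonal dE := LI_conj hGpd
    set B : Matrix (Fin d) (Fin N) ℂ := A * Liᴴ with hB
    have hBB : Bᴴ * B = Matrix.diagonal dE := by
      rw [hB, Matrix.conjTranspose_mul, Matrix.conjTranspose_conjTranspose]
      have e : Li * Aᴴ * (A * Liᴴ) = Li * (Aᴴ * A) * Liᴴ := by
        simp only [Matrix.mul_assoc]
      rw [e, hAG, hD]
    have hdEcol : ∀ x, dE x = ∑ i, star (B i x) * B i x := by
      intro x
      have h := congrFun (congrFun hBB x) x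
      simp only [Matrix.mul_apply, Matrix.conjTranspose_apply, Matrix.diagonal_apply_eq] at h
      exact h.symm
    have hdEnn : ∀ x, (0 : ℂ) ≤ dE x := fun x => by
      rw [hdEcol x]; exact Finset.sum_nonneg fun i _ => star_mul_self_nonneg _
    set r : Fin N → ℝ := fun x => (dE x).re with hr0
    have hdEr : ∀ x, dE x = ((r x : ℝ) : ℂ) := fun x => nonneg_eq_re (hdEnn x)
    have hrnn : ∀ x, 0 ≤ r x := fun x => by simpa using (Complex.le_def.mp (hdEnn x)).1
    have hLdet : Li.det ≠ 0 := (Matrix.isUnit_det_of_invertible Li).ne_zero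
    have hdetD : Li.det * G.det * star Li.det = ∏ x, dE x := by
      have h := congrArg Matrix.det hD
      rwa [Matrix.det_mul, Matrix.det_mul, Matrix.det_conjTranspose, Matrix.det_diagonal] at h
    have hdEne : ∀ x, dE x ≠ 0 := by
      intro x hx
      have h0 : (∏ x, dE x) = 0 := Finset.prod_eq_zero (Finset.mem_univ x) hx
      rw [← hdetD] at h0
      rcases mul_eq_zero.mp h0 with h1 | h1
      · rcases mul_eq_zero.mp h1 with h2 | h2
        · exact hLdet h2
        · exact hdet h2
      · exact hLdet (star_eq_zero.mp h1)
    have hrpos : ∀ x, 0 < r x := fun x =>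
      (hrnn x).lt_of_ne fun h => hdEne x (by rw [hdEr x, ← h]; simp)
    -- triangularity
    have hLtri : Li.BlockTriangular OrderDual.toDual := fun i j hij =>
      LI_tri hGpd (OrderDual.toDual_lt_toDual.mp hij)
    have hLinvtri : Li⁻¹.BlockTriangular OrderDual.toDual :=
      Matrix.blockTriangular_inv_of_blockTriangular hLtri
    have hLiLinv : Li * Li⁻¹ = 1 := Matrix.mul_nonsing_inv Li (Matrix.isUnit_det_of_invertible Li)
    have hdiaginv : ∀ x, Li x x * Li⁻¹ x x = 1 := by
      intro x
      have h1 : (1 : Matrix (Fin N) (Fin N) ℂ) x x = 1 := by simp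
      rw [← hLiLinv, Matrix.mul_apply] at h1
      rw [← h1]
      symm
      refine Finset.sum_eq_single x (fun j _ hj => ?_) (fun h => absurd (Finset.mem_univ x) h)
      rcases lt_or_gt_of_ne hj with h | h
      · rw [hLinvtri (OrderDual.toDual_lt_toDual.mpr h), mul_zero]
      · rw [hLtri (OrderDual.toDual_lt_toDual.mpr h), zero_mul]
    have hLinvne : ∀ x, Li⁻¹ x x ≠ 0 := fun x h => by simpa [h] using hdiaginv x
    have hLG : Li * G = Matrix.diagonal dE * (Li⁻¹)ᴴ := by
      have hinv : Liᴴ * (Li⁻¹)ᴴ = 1 := by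
        rw [← Matrix.conjTranspose_mul, Matrix.nonsing_inv_mul Li (Matrix.isUnit_det_of_invertible Li),
          Matrix.conjTranspose_one]
      calc Li * G = Li * G * (Liᴴ * (Li⁻¹)ᴴ) := by rw [hinv, Matrix.mul_one]
        _ = Li * G * Liᴴ * (Li⁻¹)ᴴ := by simp only [Matrix.mul_assoc]
        _ = Matrix.diagonal dE * (Li⁻¹)ᴴ := by rw [hD]
    have hLGdiag : ∀ x, (Li * G) x x = dE x * star (Li⁻¹ x x) := by
      intro x
      rw [hLG]
      simp [Matrix.diagonal_mul, Matrix.conjTranspose_apply]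
    set s : Fin N → ℝ := fun x => r x * Complex.normSq (Li⁻¹ x x) with hs0
    have hspos : ∀ x, 0 < s x := fun x =>
      mul_pos (hrpos x) (Complex.normSq_pos.mpr (hLinvne x))
    -- determinant identity
    have hdetprod : G.det.re = ∏ x, s x := by
      have hLinvdet : Li⁻¹.det = ∏ x, Li⁻¹ x x := Matrix.det_of_lowerTriangular _ hLinvtri
      have hdetinv : Li.det * Li⁻¹.det = 1 := by
        rw [← Matrix.det_mul, hLiLinv, Matrix.det_one]
      have key : ((∏ x, s x : ℝ) : ℂ) = G.det := by
        have e1 : ∀ x : Fin N, ((s x : ℝ) : ℂ) = dE x * (Li⁻¹ x x * star (Li⁻¹ x x)) := by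
          intro x
          show ((r x * Complex.normSq (Li⁻¹ x x) : ℝ) : ℂ) = _
          rw [hdEr x, Complex.star_def, Complex.mul_conj]
          push_cast
          ring
        calc ((∏ x, s x : ℝ) : ℂ) = ∏ x, ((s x : ℝ) : ℂ) := by push_cast; rfl
          _ = ∏ x, dE x * (Li⁻¹ x x * star (Li⁻¹ x x)) :=
              Finset.prod_congr rfl fun x _ => e1 x
          _ = (∏ x, dE x) * ((∏ x, Li⁻¹ x x) * star (∏ x, Li⁻¹ x x)) := by
              rw [Finset.prod_mul_distrib, Finset.prod_mul_distrib, ← starRingEnd_apply]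
              simp only [map_prod]
              simp only [starRingEnd_apply]
          _ = G.det := by
              rw [← hLinvdet, ← hdetD]
              calc Li.det * G.det * star Li.det * (Li⁻¹.det * star Li⁻¹.det)
                  = G.det * ((Li.det * Li⁻¹.det) * star (Li.det * Li⁻¹.det)) := by
                    rw [star_mul']; ring
                _ = G.det := by rw [hdetinv]; simp
      rw [← key, Complex.ofReal_re]
    -- the projection and remainder
    set x0 : Fin N := ⟨0, hN⟩ with hx0
    set Dinv : Matrix (Fin N) (Fin N) ℂ := Matrix.diagonal (fun x => (dE x)⁻¹) with hDinv
    set P : Matrix (Fin d) (Fin d) ℂ := B * Dinv * Bᴴ with hP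
    have hDinvH : Dinvᴴ = Dinv := by
      rw [hDinv, Matrix.diagonal_conjTranspose]
      have hst : (star fun x => (dE x)⁻¹) = fun x => (dE x)⁻¹ := by
        funext x
        show star ((dE x)⁻¹) = (dE x)⁻¹
        rw [hdEr x, ← Complex.ofReal_inv, Complex.star_def, Complex.conj_ofReal]
      rw [hst]
    have hPherm : Pᴴ = P := by
      rw [hP, Matrix.conjTranspose_mul (B * Dinv) Bᴴ, Matrix.conjTranspose_conjTranspose B,
        Matrix.conjTranspose_mul B Dinv, hDinvH, ← Matrix.mul_assoc]
    have hPP : P * P = P := by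
      have hmid : Dinv * (Bᴴ * B) * Dinv = Dinv := by
        rw [hBB, hDinv, Matrix.diagonal_mul_diagonal, Matrix.diagonal_mul_diagonal]
        congr 1
        funext x
        field_simp
      calc P * P = B * (Dinv * (Bᴴ * B) * Dinv) * Bᴴ := by rw [hP]; simp only [Matrix.mul_assoc]
        _ = P := by rw [hmid, hP]
    set Rm : Matrix (Fin d) (Fin d) ℂ := 1 - P with hRm
    have hRherm : Rmᴴ = Rm := by
      rw [hRm, Matrix.conjTranspose_sub, Matrix.conjTranspose_one, hPherm]
    have hRpsd : Rm.PosSemidef := by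
      have hsq : Rmᴴ * Rm = Rm := by
        rw [hRherm, hRm]
        have hexp : (1 - P) * (1 - P) = 1 - P - (P - P * P) := by noncomm_ring
        rw [hexp, hPP]
        simp only [sub_self, sub_zero]
      rw [← hsq]
      exact Matrix.posSemidef_conjTranspose_mul_self _
    -- the measurement operators
    set b : Fin N → Fin d → ℂ := fun x i => B i x with hb
    set outer : Fin N → Matrix (Fin d) (Fin d) ℂ :=
      fun x => Matrix.vecMulVec (b x) (star (b x)) with houter
    have hquad : ∀ (x : Fin N) (v : Fin d → ℂ),
        dotProduct (star v) (outer x *ᵥ v)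
          = star (dotProduct (star (b x)) v) * (dotProduct (star (b x)) v) := by
      intro x v
      simp only [houter, dotProduct, Matrix.mulVec, Pi.star_apply, Matrix.vecMulVec_apply,
        star_sum, star_mul', star_star, Finset.mul_sum, Finset.sum_mul]
      rw [Finset.sum_comm]
      refine Finset.sum_congr rfl fun i _ => Finset.sum_congr rfl fun j _ => by ring
    have houterpsd : ∀ x, (outer x).PosSemidef := by
      intro x
      refine Matrix.PosSemidef.of_dotProduct_mulVec_nonneg ?_ fun v => by rw [hquad]; exact star_mul_self_nonneg _
      ext i j
      simp only [houter, Matrix.conjTranspose_apply, Matrix.vecMulVec_apply, Pi.star_apply,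
        star_mul', star_star]
      ring
    have hMpsd : ∀ x : Fin N,
        ((dE x)⁻¹ • outer x + (if x = x0 then Rm else 0)).PosSemidef := by
      intro x
      apply psd_add
      · have e : (dE x)⁻¹ = ((((r x)⁻¹ : ℝ)) : ℂ) := by
          rw [hdEr x]; push_cast; ring
        rw [e]
        exact psd_smul (houterpsd x) (inv_nonneg.mpr (hrpos x).le)
      · by_cases hx : x = x0
        · simpa [hx] using hRpsd
        · simpa [hx] using (Matrix.PosSemidef.zero : (0 : Matrix (Fin d) (Fin d) ℂ).PosSemidef)
    have hsum : ∑ x, ((dE x)⁻¹ • outer x + (if x = x0 then Rm else 0)) = 1 := by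
      rw [Finset.sum_add_distrib]
      have h1 : ∑ x, (dE x)⁻¹ • outer x = P := by
        ext i j
        rw [hP, Matrix.mul_apply]
        simp only [Matrix.sum_apply, Matrix.smul_apply, houter, Matrix.vecMulVec_apply, hb,
          smul_eq_mul, hDinv, Matrix.mul_diagonal, Matrix.conjTranspose_apply, Pi.star_apply]
        exact Finset.sum_congr rfl fun x _ => by ring
      have h2 : (∑ x, (if x = x0 then Rm else 0)) = Rm := by
        simp
      rw [h1, h2, hRm]
      abel
    have hterm : ∀ x : Fin N, s x ≤ (dotProduct (star (ψ x))
        (((dE x)⁻¹ • outer x + (if x = x0 then Rm else 0)) *ᵥ ψ x)).re := by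
      intro x
      rw [Matrix.add_mulVec, dotProduct_add, Complex.add_re]
      have h2 : 0 ≤ (dotProduct (star (ψ x)) ((if x = x0 then Rm else 0) *ᵥ ψ x)).re := by
        by_cases hx : x = x0
        · rw [if_pos hx]; exact psd_re_nonneg hRpsd _
        · rw [if_neg hx]; simp
      have h1 : (dotProduct (star (ψ x)) (((dE x)⁻¹ • outer x) *ᵥ ψ x)).re = s x := by
        rw [Matrix.smul_mulVec, dotProduct_smul, smul_eq_mul, hquad]
        have hw : dotProduct (star (b x)) (ψ x) = dE x * star (Li⁻¹ x x) := by
          have e1 : dotProduct (star (b x)) (ψ x) = (Bᴴ * A) x x := by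
            simp only [Matrix.mul_apply, Matrix.conjTranspose_apply, dotProduct,
              Pi.star_apply, hb, hA, Matrix.of_apply]
          rw [e1]
          have hBA : Bᴴ * A = Li * G := by
            rw [hB, Matrix.conjTranspose_mul, Matrix.conjTranspose_conjTranspose,
              Matrix.mul_assoc]
            rw [← hAG]
          rw [hBA]
          exact hLGdiag x
        rw [hw, hdEr x]
        have hns : star (((r x : ℝ) : ℂ) * star (Li⁻¹ x x)) * (((r x : ℝ) : ℂ) * star (Li⁻¹ x x))
            = ((Complex.normSq (((r x : ℝ) : ℂ) * star (Li⁻¹ x x)) : ℝ) : ℂ) := by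
          rw [Complex.star_def, mul_comm, Complex.mul_conj]
        rw [hns, ← Complex.ofReal_inv, ← Complex.ofReal_mul, Complex.ofReal_re,
          Complex.normSq_mul, Complex.normSq_ofReal, Complex.star_def, Complex.normSq_conj, hs0]
        field_simp [(hrpos x).ne']
      rw [h1]
      linarith
    refine ⟨fun x => (dE x)⁻¹ • outer x + (if x = x0 then Rm else 0), hMpsd, hsum, ?_⟩
    have hineq1 : G.det.re ^ ((1 : ℝ) / N) ≤ (1 / (N : ℝ)) * ∑ x, s x := by
      rw [hdetprod]
      have hwsum : (∑ _x : Fin N, (1 : ℝ) / N) = 1 := by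
        rw [Finset.sum_const, Finset.card_univ, Fintype.card_fin, nsmul_eq_mul]
        field_simp
      have hgm := Real.geom_mean_le_arith_mean_weighted Finset.univ (fun _ => (1 : ℝ) / N) s
        (fun i _ => by positivity) hwsum (fun i _ => (hspos i).le)
      calc (∏ x, s x) ^ ((1 : ℝ) / N)
          = ∏ x, s x ^ ((1 : ℝ) / N) :=
            (Real.finset_prod_rpow Finset.univ s (fun i _ => (hspos i).le) _).symm
        _ ≤ ∑ x, (1 : ℝ) / N * s x := hgm
        _ = (1 / (N : ℝ)) * ∑ x, s x := by rw [Finset.mul_sum]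
    refine hineq1.trans ?_
    exact mul_le_mul_of_nonneg_left (Finset.sum_le_sum fun x _ => hterm x) (by positivity)

end Stmt9Aux

lemma stmt9_dot_sum_mulVec {d N : ℕ} (M : Fin N → Matrix (Fin d) (Fin d) ℂ) (v : Fin d → ℂ)
    (t : Finset (Fin N)) :
    dotProduct (star v) ((∑ y ∈ t, M y) *ᵥ v)
      = ∑ y ∈ t, dotProduct (star v) (M y *ᵥ v) := by
  induction t using Finset.induction with
  | empty => simp
  | insert _ _ h ih =>
      rw [Finset.sum_insert h, Finset.sum_insert h, Matrix.add_mulVec, dotProduct_add, ih]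

/-- for unit vectors `ψ x` in `ℂ^d` with Gram matrix `G`, there exists a POVM
`(M x)` on `ℂ^d` whose average success probability on the uniform ensemble is at least
`(det G)^{1/N}`; in particular the optimal average success probability of discrimination
is at least `(det G)^{1/N}`. -/
theorem stmt_9 (d N : ℕ) (hN : 1 ≤ N)
    (ψ : Fin N → Fin d → ℂ)
    (hunit : ∀ x, dotProduct (star (ψ x)) (ψ x) = 1)
    (G : Matrix (Fin N) (Fin N) ℂ)
    (hG : ∀ i j, G i j = dotProduct (star (ψ i)) (ψ j)) :
    (∃ M : Fin N → Matrix (Fin d) (Fin d) ℂ,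
      (∀ x, (M x).PosSemidef) ∧ (∑ x, M x = 1) ∧
      G.det.re ^ ((1 : ℝ) / N) ≤
        (1 / (N : ℝ)) * ∑ x, (dotProduct (star (ψ x)) (M x *ᵥ ψ x)).re) ∧
    G.det.re ^ ((1 : ℝ) / N) ≤
      sSup {p : ℝ | ∃ M : Fin N → Matrix (Fin d) (Fin d) ℂ,
        (∀ x, (M x).PosSemidef) ∧ (∑ x, M x = 1) ∧
        p = (1 / (N : ℝ)) * ∑ x, (dotProduct (star (ψ x)) (M x *ᵥ ψ x)).re} := by
  obtain ⟨M, hpsd, hsum, hle⟩ := Stmt9Aux.main_povm d N hN ψ hunit G hG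
  have hbdd : BddAbove {p : ℝ | ∃ M : Fin N → Matrix (Fin d) (Fin d) ℂ,
      (∀ x, (M x).PosSemidef) ∧ (∑ x, M x = 1) ∧
      p = (1 / (N : ℝ)) * ∑ x, (dotProduct (star (ψ x)) (M x *ᵥ ψ x)).re} := by
    refine ⟨1, fun p hp => ?_⟩
    obtain ⟨M', hpsd', hsum', rfl⟩ := hp
    have hterm : ∀ x, (dotProduct (star (ψ x)) (M' x *ᵥ ψ x)).re ≤ 1 := by
      intro x
      have htot : ∑ y, (dotProduct (star (ψ x)) (M' y *ᵥ ψ x)).re = 1 := by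
        rw [← Complex.re_sum, ← stmt9_dot_sum_mulVec, hsum', Matrix.one_mulVec, hunit x,
          Complex.one_re]
      rw [← htot]
      exact Finset.single_le_sum
        (f := fun y => (dotProduct (star (ψ x)) (M' y *ᵥ ψ x)).re)
        (fun y _ => Stmt9Aux.psd_re_nonneg (hpsd' y) _) (Finset.mem_univ x)
    have hN0 : (0:ℝ) < (N : ℝ) := by exact_mod_cast Nat.pos_of_ne_zero (by omega)
    calc (1 / (N : ℝ)) * ∑ x, (dotProduct (star (ψ x)) (M' x *ᵥ ψ x)).re
        ≤ (1 / (N : ℝ)) * ∑ _x : Fin N, (1:ℝ) := by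
          refine mul_le_mul_of_nonneg_left (Finset.sum_le_sum fun x _ => hterm x) (by positivity)
      _ = 1 := by
          rw [Finset.sum_const, Finset.card_univ, Fintype.card_fin, nsmul_eq_mul, mul_one]
          field_simp
  refine ⟨⟨M, hpsd, hsum, hle⟩, hle.trans (le_csSup hbdd ⟨M, hpsd, hsum, rfl⟩)⟩
end

section
/- Let ψ_1, …, ψ_N be unit vectors in ℂ^d with Gram matrix G_{ij} = ⟨ψ_i, ψ_j⟩. Let (M_x)_{x=0}^{N} be any POVM on ℂ^d (positive semidefinite matrices with ∑_{x=0}^{N} M_x = I) that performs unambiguous discrimination, i.e. ⟨ψ_y, M_x ψ_y⟩ = 0 for all x ≠ y with 1 ≤ x, y ≤ N. Then the worst-case success probability satisfies min_{1 ≤ x ≤ N} ⟨ψ_x, M_x ψ_x⟩ ≤ λ_min(G) ≤ (det G)^{1/N}, where λ_min(G) is the smallest eigenvalue of G. In particular the optimal worst-case success probability of unambiguous discrimination obeys P_UN^opt ≤ (det G)^{1/N}. -/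
open Matrix
open scoped ComplexOrder

private lemma sum_mulVec' {m k : ℕ} (M : Fin m → Matrix (Fin k) (Fin k) ℂ) (v : Fin k → ℂ) :
    (∑ z, M z) *ᵥ v = ∑ z, M z *ᵥ v := by
  ext i
  simp only [mulVec, dotProduct, Matrix.sum_apply, Finset.sum_apply, Finset.sum_mul]
  rw [Finset.sum_comm]

private lemma key_bound (d N : ℕ) (hN : 1 ≤ N)
    (ψ : Fin N → Fin d → ℂ)
    (hunit : ∀ x, dotProduct (star (ψ x)) (ψ x) = 1)
    (G : Matrix (Fin N) (Fin N) ℂ)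
    (hG : ∀ i j, G i j = dotProduct (star (ψ i)) (ψ j))
    (hGH : G.IsHermitian)
    (M : Fin (N + 1) → Matrix (Fin d) (Fin d) ℂ)
    (hPSD : ∀ x, (M x).PosSemidef) (hsum : ∑ x, M x = 1)
    (hun : ∀ x y : Fin N, x ≠ y →
        dotProduct (star (ψ y)) (M x.succ *ᵥ ψ y) = 0) :
      (⨅ x : Fin N, (dotProduct (star (ψ x)) (M x.succ *ᵥ ψ x)).re) ≤
        ⨅ i, hGH.eigenvalues i := by
  haveI : Nonempty (Fin N) := ⟨⟨0, hN⟩⟩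
  set p : Fin N → ℝ := fun x => (dotProduct (star (ψ x)) (M x.succ *ᵥ ψ x)).re with hp
  have hbddp : BddBelow (Set.range p) := (Set.finite_range p).bddBelow
  -- outcomes kill wrong states
  have hkill : ∀ x y : Fin N, x ≠ y → M x.succ *ᵥ ψ y = 0 := fun x y hxy =>
    ((hPSD x.succ).dotProduct_mulVec_zero_iff (ψ y)).mp (hun x y hxy)
  -- diagonal entries c
  set c : Fin N → ℂ := fun x => dotProduct (star (ψ x)) (M x.succ *ᵥ ψ x) with hc
  -- Gram matrix of M0-parts
  set Γ : Matrix (Fin N) (Fin N) ℂ :=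
    Matrix.of (fun i j => dotProduct (star (ψ i)) (M 0 *ᵥ ψ j)) with hΓdef
  -- decomposition of ψ
  have hdec : ∀ x : Fin N, ψ x = M 0 *ᵥ ψ x + M x.succ *ᵥ ψ x := by
    intro x
    have h1 : (∑ z, M z) *ᵥ ψ x = ψ x := by rw [hsum, one_mulVec]
    rw [sum_mulVec', Fin.sum_univ_succ] at h1
    rw [Finset.sum_eq_single x (fun y _ hyx => hkill y x hyx) (by simp)] at h1
    exact h1.symm
  -- cross terms vanish
  have hcross : ∀ i j : Fin N, i ≠ j →
      dotProduct (star (ψ i)) (M j.succ *ᵥ ψ j) = 0 := by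
    intro i j hij
    have hH : (M j.succ)ᴴ = M j.succ := (hPSD j.succ).1
    rw [dotProduct_mulVec, ← star_star (star (ψ i) ᵥ* M j.succ)]
    rw [star_vecMul, star_star, hH, hkill j i (fun h => hij h.symm)]
    simp
  -- G = Γ + diagonal c
  have hGsum : G = Γ + Matrix.diagonal c := by
    ext i j
    by_cases hij : i = j
    · subst hij
      rw [hG i i]
      nth_rewrite 2 [hdec i]
      simp [dotProduct_add, hΓdef, hc]
    · rw [hG i j]
      nth_rewrite 1 [hdec j]
      rw [dotProduct_add]
      simp [hΓdef, Matrix.diagonal_apply_ne _ hij, hcross i j hij]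
  -- Γ is PSD
  have hΓpsd : Γ.PosSemidef := by
    have := (hPSD 0).conjTranspose_mul_mul_same (B := Matrix.of (fun (k : Fin d) (i : Fin N) => ψ i k))
    convert this using 1
    ext i j
    simp only [hΓdef, Matrix.of_apply, Matrix.mul_apply, Matrix.conjTranspose_apply,
      Matrix.mulVec, dotProduct, Pi.star_apply, Finset.sum_mul, Finset.mul_sum]
    rw [Finset.sum_comm]
    refine Finset.sum_congr rfl fun k _ => Finset.sum_congr rfl fun l _ => by ring
  -- pick minimizing eigenvalue
  obtain ⟨j, hj⟩ := Finite.exists_min hGH.eigenvalues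
  have hbdde : BddBelow (Set.range hGH.eigenvalues) := (Set.finite_range _).bddBelow
  have hinf_eig : (⨅ i, hGH.eigenvalues i) = hGH.eigenvalues j :=
    le_antisymm (ciInf_le hbdde j) (le_ciInf hj)
  set w : Fin N → ℂ := ⇑(hGH.eigenvectorBasis j) with hw
  have hnorm : dotProduct (star w) w = 1 := by
    have h1 : ‖hGH.eigenvectorBasis j‖ = 1 := hGH.eigenvectorBasis.orthonormal.1 j
    have h2 : (inner ℂ (hGH.eigenvectorBasis j) (hGH.eigenvectorBasis j) : ℂ) = 1 := by
      rw [inner_self_eq_norm_sq_to_K, h1]; norm_num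
    rw [EuclideanSpace.inner_eq_star_dotProduct] at h2
    rw [dotProduct_comm] at h2; exact h2
  have heig : dotProduct (star w) (G *ᵥ w) = (hGH.eigenvalues j : ℂ) := by
    rw [hGH.mulVec_eigenvectorBasis j]
    rw [dotProduct_smul]
    rw [hnorm]
    simp [RCLike.real_smul_eq_coe_mul]
  -- expand
  have hsplit : dotProduct (star w) (G *ᵥ w) =
      dotProduct (star w) (Γ *ᵥ w) + ∑ i, c i * ((starRingEnd ℂ) (w i) * w i) := by
    rw [hGsum, Matrix.add_mulVec, dotProduct_add]
    congr 1
    simp only [dotProduct, Matrix.mulVec_diagonal, Pi.star_apply]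
    refine Finset.sum_congr rfl fun i _ => ?_
    rw [RCLike.star_def]; ring
  -- real parts
  have hcre : ∀ i, 0 ≤ (c i).re := fun i => (hPSD i.succ).re_dotProduct_nonneg (ψ i)
  have hΓre : 0 ≤ (dotProduct (star w) (Γ *ᵥ w)).re := hΓpsd.re_dotProduct_nonneg w
  have hcim : ∀ i, (c i).im = 0 := by
    intro i
    have := (hPSD i.succ).dotProduct_mulVec_nonneg (ψ i)
    rw [Complex.le_def] at this
    exact this.2.symm
  have hterm : ∀ i, (c i * ((starRingEnd ℂ) (w i) * w i)).re
      = (c i).re * Complex.normSq (w i) := by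
    intro i
    have : (starRingEnd ℂ) (w i) * w i = (Complex.normSq (w i) : ℂ) := by
      rw [mul_comm, Complex.mul_conj]
    rw [this, Complex.mul_re]
    simp
  have hsum_norm : ∑ i, Complex.normSq (w i) = 1 := by
    have := congrArg Complex.re hnorm
    simp only [dotProduct, Pi.star_apply, Complex.re_sum, Complex.one_re] at this
    rw [← this]
    refine Finset.sum_congr rfl fun i _ => ?_
    rw [RCLike.star_def, mul_comm, Complex.mul_conj]
    simp
  have hfinal : (⨅ x, p x) ≤ hGH.eigenvalues j := by
    have h1 : hGH.eigenvalues j = (dotProduct (star w) (Γ *ᵥ w)).re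
        + ∑ i, (c i).re * Complex.normSq (w i) := by
      have := congrArg Complex.re (heig.symm.trans hsplit)
      simpa [Complex.re_sum, hterm] using this
    have h2 : (⨅ x, p x) ≤ ∑ i, (c i).re * Complex.normSq (w i) := by
      calc (⨅ x, p x) = (⨅ x, p x) * ∑ i, Complex.normSq (w i) := by rw [hsum_norm, mul_one]
        _ = ∑ i, (⨅ x, p x) * Complex.normSq (w i) := by rw [Finset.mul_sum]
        _ ≤ ∑ i, (c i).re * Complex.normSq (w i) := by
            refine Finset.sum_le_sum fun i _ => ?_
            exact mul_le_mul_of_nonneg_right (ciInf_le hbddp i) (Complex.normSq_nonneg _)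
    calc (⨅ x, p x) ≤ ∑ i, (c i).re * Complex.normSq (w i) := h2
      _ ≤ hGH.eigenvalues j := by rw [h1]; linarith
  rw [hinf_eig]
  exact hfinal


/-- for unit vectors `ψ x` in `ℂ^d` with Hermitian Gram matrix `G`, any POVM
`(M x)_{x=0}^{N}` performing unambiguous discrimination (outcome `x ∈ {1,…,N}` never occurs
on `ψ y` for `y ≠ x`, index `0` being inconclusive) has worst-case success probability at
most `λ_min(G)`, which in turn is at most `(det G)^{1/N}`; in particular the optimal
worst-case success probability of unambiguous discrimination is at most `(det G)^{1/N}`. -/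
theorem stmt_10 (d N : ℕ) (hN : 1 ≤ N)
    (ψ : Fin N → Fin d → ℂ)
    (hunit : ∀ x, dotProduct (star (ψ x)) (ψ x) = 1)
    (G : Matrix (Fin N) (Fin N) ℂ)
    (hG : ∀ i j, G i j = dotProduct (star (ψ i)) (ψ j))
    (hGH : G.IsHermitian) :
    (∀ M : Fin (N + 1) → Matrix (Fin d) (Fin d) ℂ,
      (∀ x, (M x).PosSemidef) → (∑ x, M x = 1) →
      (∀ x y : Fin N, x ≠ y →
        dotProduct (star (ψ y)) (M x.succ *ᵥ ψ y) = 0) →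
      (⨅ x : Fin N, (dotProduct (star (ψ x)) (M x.succ *ᵥ ψ x)).re) ≤
        ⨅ i, hGH.eigenvalues i) ∧
    (⨅ i, hGH.eigenvalues i) ≤ G.det.re ^ ((1 : ℝ) / N) ∧
    sSup {p : ℝ | ∃ M : Fin (N + 1) → Matrix (Fin d) (Fin d) ℂ,
        (∀ x, (M x).PosSemidef) ∧ (∑ x, M x = 1) ∧
        (∀ x y : Fin N, x ≠ y →
          dotProduct (star (ψ y)) (M x.succ *ᵥ ψ y) = 0) ∧
        p = ⨅ x : Fin N, (dotProduct (star (ψ x)) (M x.succ *ᵥ ψ x)).re} ≤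
      G.det.re ^ ((1 : ℝ) / N) := by
  haveI : Nonempty (Fin N) := ⟨⟨0, hN⟩⟩
  have hNne : (N : ℝ) ≠ 0 := Nat.cast_ne_zero.mpr (by omega)
  have part1 := fun M hP hs hu => key_bound d N hN ψ hunit G hG hGH M hP hs hu
  -- G is positive semidefinite
  have hGfact : G = (Matrix.of fun (k : Fin d) (i : Fin N) => ψ i k)ᴴ *
      (Matrix.of fun (k : Fin d) (i : Fin N) => ψ i k) := by
    ext i j
    simp [Matrix.mul_apply, Matrix.conjTranspose_apply, hG, dotProduct]
  have hGpsd : G.PosSemidef := hGfact ▸ posSemidef_conjTranspose_mul_self _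
  have heignn : ∀ i, 0 ≤ hGH.eigenvalues i := fun i => hGpsd.eigenvalues_nonneg i
  have hbdde : BddBelow (Set.range hGH.eigenvalues) := (Set.finite_range _).bddBelow
  have hdetre : G.det.re = ∏ i, hGH.eigenvalues i := by
    have hdet : G.det = ((∏ i, hGH.eigenvalues i : ℝ) : ℂ) := by
      rw [hGH.det_eq_prod_eigenvalues]; push_cast; rfl
    rw [hdet, Complex.ofReal_re]
  have hdetnn : 0 ≤ G.det.re := by
    rw [hdetre]; exact Finset.prod_nonneg fun i _ => heignn i
  set lam : ℝ := ⨅ i, hGH.eigenvalues i with hlam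
  have hlamnn : 0 ≤ lam := le_ciInf fun i => heignn i
  have part2 : lam ≤ G.det.re ^ ((1 : ℝ) / N) := by
    have hpow : lam ^ N ≤ ∏ i, hGH.eigenvalues i := by
      calc lam ^ N = ∏ _i : Fin N, lam := by
            rw [Finset.prod_const, Finset.card_univ, Fintype.card_fin]
        _ ≤ ∏ i, hGH.eigenvalues i :=
            Finset.prod_le_prod (fun i _ => hlamnn) (fun i _ => ciInf_le hbdde i)
    have h1 : (lam ^ N) ^ ((1 : ℝ) / N) = lam := by
      rw [← Real.rpow_natCast lam N, ← Real.rpow_mul hlamnn, mul_one_div,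
        div_self hNne, Real.rpow_one]
    calc lam = (lam ^ N) ^ ((1 : ℝ) / N) := h1.symm
      _ ≤ G.det.re ^ ((1 : ℝ) / N) := by
          apply Real.rpow_le_rpow (pow_nonneg hlamnn N) _ (by positivity)
          rw [hdetre]; exact hpow
  refine ⟨part1, part2, ?_⟩
  apply Real.sSup_le _ (Real.rpow_nonneg hdetnn _)
  rintro x ⟨M, hP, hs, hu, rfl⟩
  exact le_trans (part1 M hP hs hu) part2
end

section
/- Let (Ω, μ) be a probability space, let f, g : Ω → ℝ be measurable, let μ_f, μ_g be nonzero real numbers, and let ε_f, ε_g : (0,∞) → [0,∞) be functions such that for every δ > 0, μ{ω : |f(ω)/μ_f − 1| > δ} ≤ ε_f(δ) and μ{ω : |g(ω)/μ_g − 1| > δ} ≤ ε_g(δ). Then for every δ > 0, μ{ω : |f(ω)g(ω)/(μ_f μ_g) − 1| > δ} ≤ ε_f(√(δ/3)) + ε_g(√(δ/3)) + ε_f(δ/3) + ε_g(δ/3). -/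
open MeasureTheory

/-- if on a probability space `f` concentrates around `μ_f ≠ 0` with
concentration function `ε_f` and `g` concentrates around `μ_g ≠ 0` with concentration
function `ε_g`, then the product `f g` concentrates around `μ_f μ_g`:
`μ {|fg/(μ_f μ_g) - 1| > δ} ≤ ε_f(√(δ/3)) + ε_g(√(δ/3)) + ε_f(δ/3) + ε_g(δ/3)`. -/
theorem stmt_11 {Ω : Type*} [MeasurableSpace Ω] (μ : Measure Ω) [IsProbabilityMeasure μ]
    (f g : Ω → ℝ) (hf : Measurable f) (hg : Measurable g)
    (mf mg : ℝ) (hmf : mf ≠ 0) (hmg : mg ≠ 0)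
    (εf εg : ℝ → NNReal)
    (hεf : ∀ δ : ℝ, 0 < δ → μ {ω | δ < |f ω / mf - 1|} ≤ (εf δ : ENNReal))
    (hεg : ∀ δ : ℝ, 0 < δ → μ {ω | δ < |g ω / mg - 1|} ≤ (εg δ : ENNReal)) :
    ∀ δ : ℝ, 0 < δ →
      μ {ω | δ < |f ω * g ω / (mf * mg) - 1|} ≤
        (εf (Real.sqrt (δ / 3)) : ENNReal) + (εg (Real.sqrt (δ / 3)) : ENNReal) +
          (εf (δ / 3) : ENNReal) + (εg (δ / 3) : ENNReal) := by
  intro δ hδ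
  have h3 : (0:ℝ) < δ / 3 := by linarith
  have hs : (0:ℝ) < Real.sqrt (δ / 3) := Real.sqrt_pos.mpr h3
  set s := Real.sqrt (δ / 3) with hsdef
  have hsub : {ω | δ < |f ω * g ω / (mf * mg) - 1|} ⊆
      ({ω | s < |f ω / mf - 1|} ∪ {ω | s < |g ω / mg - 1|}) ∪
      ({ω | δ / 3 < |f ω / mf - 1|} ∪ {ω | δ / 3 < |g ω / mg - 1|}) := by
    intro ω hω
    by_contra hc
    simp only [Set.mem_union, Set.mem_setOf_eq, not_or, not_lt] at hc
    obtain ⟨⟨h1, h2⟩, h3', h4⟩ := hc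
    simp only [Set.mem_setOf_eq] at hω
    set x := f ω / mf - 1 with hx
    set y := g ω / mg - 1 with hy
    have hkey : f ω * g ω / (mf * mg) - 1 = x * y + x + y := by
      field_simp [hx, hy]
      rw [hx, hy]; field_simp; ring
    have hss : s * s = δ / 3 := Real.mul_self_sqrt h3.le
    have habs : |x * y + x + y| ≤ δ := by
      calc |x * y + x + y| ≤ |x * y| + |x| + |y| := by
            calc |x * y + x + y| ≤ |x * y + x| + |y| := abs_add_le _ _
              _ ≤ |x * y| + |x| + |y| := by linarith [abs_add_le (x*y) x]
        _ ≤ s * s + δ / 3 + δ / 3 := by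
            have : |x * y| ≤ s * s := by
              rw [abs_mul]
              exact mul_le_mul h1 h2 (abs_nonneg _) hs.le
            linarith
        _ = δ := by rw [hss]; ring
    rw [hkey] at hω
    linarith
  calc μ {ω | δ < |f ω * g ω / (mf * mg) - 1|} ≤
      μ (({ω | s < |f ω / mf - 1|} ∪ {ω | s < |g ω / mg - 1|}) ∪
        ({ω | δ / 3 < |f ω / mf - 1|} ∪ {ω | δ / 3 < |g ω / mg - 1|})) := measure_mono hsub
    _ ≤ μ ({ω | s < |f ω / mf - 1|} ∪ {ω | s < |g ω / mg - 1|}) +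
        μ ({ω | δ / 3 < |f ω / mf - 1|} ∪ {ω | δ / 3 < |g ω / mg - 1|}) := measure_union_le _ _
    _ ≤ (μ {ω | s < |f ω / mf - 1|} + μ {ω | s < |g ω / mg - 1|}) +
        (μ {ω | δ / 3 < |f ω / mf - 1|} + μ {ω | δ / 3 < |g ω / mg - 1|}) :=
          add_le_add (measure_union_le _ _) (measure_union_le _ _)
    _ ≤ ((εf s : ENNReal) + (εg s : ENNReal)) + ((εf (δ / 3) : ENNReal) + (εg (δ / 3) : ENNReal)) :=
          add_le_add (add_le_add (hεf s hs) (hεg s hs))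
            (add_le_add (hεf _ h3) (hεg _ h3))
    _ = (εf s : ENNReal) + (εg s : ENNReal) + (εf (δ / 3) : ENNReal) + (εg (δ / 3) : ENNReal) := by
          ring
end
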